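/- The function g(x) = (x/(1+x))·(1/(1+x))^(1/x) is strictly increasing on (0, ∞); that is, for all real numbers 0 < x < y, (x/(1+x))·(1/(1+x))^(1/x) < (y/(1+y))·(1/(1+y))^(1/y). -/

import Mathlib

open Real Set

noncomputable def fAux : ℝ → ℝ := fun t => Real.log t - (1 + t⁻¹) * Real.log (1 + t)

lemma fAux_hasDerivAt (x : ℝ) (hx : 0 < x) :
    HasDerivAt fAux (Real.log (1 + x) / x ^ 2) x := by
  have hx' : x ≠ 0 := hx.ne'
  have h1x : (0:ℝ) < 1 + x := by linarith
  have h1 : HasDerivAt Real.log x⁻¹ x := Real.hasDerivAt_log hx'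
  have h2 : HasDerivAt (fun t : ℝ => 1 + t⁻¹) (-(x^2)⁻¹) x := by
    simpa using (hasDerivAt_inv hx').const_add 1
  have h3 : HasDerivAt (fun t : ℝ => Real.log (1 + t)) ((1 + x)⁻¹) x := by
    have := ((hasDerivAt_id x).const_add 1).log h1x.ne'
    simpa using this
  have h4 := h1.sub (h2.mul h3)
  have e : Real.log (1 + x) / x ^ 2 = x⁻¹ - (-(x ^ 2)⁻¹ * Real.log (1 + x) + (1 + x⁻¹) * (1 + x)⁻¹) := by
    field_simp
    ring
  rw [e]
  exact h4

lemma fAux_strictMono : StrictMonoOn fAux (Ioi (0:ℝ)) := by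
  apply strictMonoOn_of_deriv_pos (convex_Ioi 0)
  · exact fun t ht => (fAux_hasDerivAt t ht).continuousAt.continuousWithinAt
  · intro t ht
    rw [interior_Ioi] at ht
    rw [(fAux_hasDerivAt t ht).deriv]
    have ht' : (0:ℝ) < t := mem_Ioi.mp ht
    have h1 : Real.log (1 + t) > 0 := Real.log_pos (by linarith)
    positivity

lemma g_eq (x : ℝ) (hx : 0 < x) :
    (x / (1 + x)) * (1 / (1 + x)) ^ (1 / x) = Real.exp (fAux x) := by
  have h1x : (0:ℝ) < 1 + x := by linarith
  have h1 : (0:ℝ) < 1 / (1 + x) := by positivity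
  rw [Real.rpow_def_of_pos h1]
  have h2 : Real.log (1 / (1 + x)) = -Real.log (1 + x) := by
    rw [one_div, Real.log_inv]
  have h3 : x / (1 + x) = Real.exp (Real.log x - Real.log (1 + x)) := by
    rw [Real.exp_sub, Real.exp_log hx, Real.exp_log h1x]
  rw [h3, h2, ← Real.exp_add, fAux]
  congr 1
  field_simp
  ring

theorem stmt_4 (x y : ℝ) (hx : 0 < x) (hxy : x < y) :
    (x / (1 + x)) * (1 / (1 + x)) ^ (1 / x) <
      (y / (1 + y)) * (1 / (1 + y)) ^ (1 / y) := by
  have hy : 0 < y := hx.trans hxy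
  rw [g_eq x hx, g_eq y hy]
  exact Real.exp_lt_exp.mpr (fAux_strictMono (mem_Ioi.mpr hx) (mem_Ioi.mpr hy) hxy)
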